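/- arXiv:2411.07782 — 4 statements merged into one kernel-verified Lean document; each statement's English description precedes it below -/
import Mathlib

section
/- Let V = {v^1, …, v^k} be binary vectors of length d, u^i = 1^d − v^i, and let T1 = ∏_{i=1}^{k} ∏_{j=1}^{d} {0, u^i_j} be the ED string over {0,1} whose (i,j)-th segment is the set of one-letter strings {0, u^i_j}. Then for all a, b ∈ [1,k], the string 0^{(a−1)d} · v^b · 0^{(k−a)d} (where v^b is viewed as a length-d binary string) belongs to L(T1) if and only if v^a and v^b are orthogonal, i.e., Σ_{j=1}^{d} v^a_j · v^b_j = 0. -/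
/-- The language of an elastic-degenerate string, given as the list of its segments
(each segment is a set of strings over the alphabet `α`). -/
def EDLang {α : Type*} : List (Set (List α)) → Set (List α)
  | [] => {[]}
  | S :: rest => { w | ∃ s ∈ S, ∃ t ∈ EDLang rest, w = s ++ t }

lemma EDLang_singletons {α : Type*} (cs : List (Set α)) :
    EDLang (cs.map fun C => (fun c => ([c] : List α)) '' C) =
      {w | List.Forall₂ (· ∈ ·) w cs} := by
  induction cs with
  | nil => ext w; simp [EDLang, List.forall₂_nil_right_iff]
  | cons C rest ih =>
    ext w
    simp only [List.map_cons, EDLang, Set.mem_setOf_eq, ih, List.forall₂_cons_right_iff]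
    constructor
    · rintro ⟨s, ⟨c, hc, rfl⟩, t, ht, rfl⟩
      exact ⟨c, t, hc, ht, rfl⟩
    · rintro ⟨c, t, hc, ht, rfl⟩
      exact ⟨[c], ⟨c, hc, rfl⟩, t, ht, rfl⟩

lemma forall₂_append_iff {α β : Type*} {R : α → β → Prop} {l₁ u₁ : List α} {l₂ u₂ : List β}
    (h : l₁.length = l₂.length) :
    List.Forall₂ R (l₁ ++ u₁) (l₂ ++ u₂) ↔ List.Forall₂ R l₁ l₂ ∧ List.Forall₂ R u₁ u₂ := by
  induction l₁ generalizing l₂ with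
  | nil =>
    cases l₂ with
    | nil => simp
    | cons _ _ => simp at h
  | cons x xs ih =>
    cases l₂ with
    | nil => simp at h
    | cons y ys =>
      simp only [List.length_cons, Nat.add_right_cancel_iff] at h
      simp [List.forall₂_cons, ih h, and_assoc]

lemma forall₂_replicate_mem {α : Type*} (z : α) (cs : List (Set α))
    (hz : ∀ C ∈ cs, z ∈ C) :
    List.Forall₂ (· ∈ ·) (List.replicate cs.length z) cs := by
  induction cs with
  | nil => simp
  | cons C rest ih =>
    simp only [List.length_cons, List.replicate_succ]
    exact List.Forall₂.cons (hz C (by simp)) (ih fun C' h => hz C' (by simp [h]))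

/-- For binary vectors `v 0, …, v (k-1)` of length `d` and
`T1 = ∏_{i} ∏_{j} {0, 1 - v i j}`, the string `0^{a·d} · (v b) · 0^{(k-1-a)·d}`
(with `a` zero-indexed, corresponding to `0^{(a-1)d} · v^b · 0^{(k-a)d}` for one-indexed `a`)
belongs to `L(T1)` iff `v a` and `v b` are orthogonal. -/
theorem mem_T1_iff_orthogonal (k d : ℕ) (v : Fin k → Fin d → Fin 2) (a b : Fin k) :
    (List.replicate ((a : ℕ) * d) (0 : Fin 2) ++ List.ofFn (v b) ++
        List.replicate ((k - 1 - (a : ℕ)) * d) (0 : Fin 2)) ∈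
      EDLang ((List.finRange k).flatMap fun i =>
        (List.finRange d).map fun j => ({[(0 : Fin 2)], [1 - v i j]} : Set (List (Fin 2)))) ↔
      ∑ j : Fin d, ((v a j : ℕ) * (v b j : ℕ)) = 0 := by
  -- rewrite segments as images of letter sets
  set g : Fin k → List (Set (Fin 2)) :=
    fun i => (List.finRange d).map fun j => ({0, 1 - v i j} : Set (Fin 2)) with hg
  have hseg : ((List.finRange k).flatMap fun i =>
      (List.finRange d).map fun j => ({[(0 : Fin 2)], [1 - v i j]} : Set (List (Fin 2)))) =
      ((List.finRange k).flatMap g).map fun C => (fun c => ([c] : List (Fin 2))) '' C := by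
    rw [List.map_flatMap]
    apply List.flatMap_congr
    intro i _
    rw [hg, List.map_map]
    apply List.map_congr_left
    intro j _
    simp [Set.image_pair]
  rw [hseg, EDLang_singletons, Set.mem_setOf_eq]
  -- split finRange k at position a
  have ha : (a : ℕ) < k := a.isLt
  have hsplit : List.finRange k =
      (List.finRange k).take (a : ℕ) ++ a :: (List.finRange k).drop ((a : ℕ) + 1) := by
    conv_lhs => rw [← List.take_append_drop (a : ℕ) (List.finRange k)]
    congr 1
    rw [List.drop_eq_getElem_cons (by simp [ha])]
    simp
  have hlenA : (((List.finRange k).take (a : ℕ)).flatMap g).length = (a : ℕ) * d := by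
    rw [List.length_flatMap]
    have : (List.length ∘ g) = fun _ => d := funext fun i => by simp [hg]
    rw [show (fun a => (g a).length) = fun _ => d from this]
    simp [List.map_const', Nat.min_eq_left (le_of_lt ha), Nat.mul_comm]
  have hlenB : (g a).length = d := by simp [hg]
  rw [hsplit, List.flatMap_append, List.flatMap_cons, List.append_assoc]
  rw [forall₂_append_iff (by simp [hlenA]), forall₂_append_iff (by simp [hlenB])]
  have hmemA : List.Forall₂ (· ∈ ·) (List.replicate ((a : ℕ) * d) (0 : Fin 2))
      (((List.finRange k).take (a : ℕ)).flatMap g) := by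
    rw [← hlenA]
    apply forall₂_replicate_mem
    intro C hC
    simp only [List.mem_flatMap, hg, List.mem_map] at hC
    obtain ⟨i, _, j, _, rfl⟩ := hC
    exact Set.mem_insert 0 _
  have hmemC : List.Forall₂ (· ∈ ·) (List.replicate ((k - 1 - (a : ℕ)) * d) (0 : Fin 2))
      (((List.finRange k).drop ((a : ℕ) + 1)).flatMap g) := by
    have hlen : (((List.finRange k).drop ((a : ℕ) + 1)).flatMap g).length
        = (k - 1 - (a : ℕ)) * d := by
      rw [List.length_flatMap]
      have : (List.length ∘ g) = fun _ => d := funext fun i => by simp [hg]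
      rw [show (fun a => (g a).length) = fun _ => d from this]
      simp only [List.map_const', List.length_drop, List.length_finRange, List.sum_replicate,
        smul_eq_mul]
      congr 1
      omega
    rw [← hlen]
    apply forall₂_replicate_mem
    intro C hC
    simp only [List.mem_flatMap, hg, List.mem_map] at hC
    obtain ⟨i, _, j, _, rfl⟩ := hC
    exact Set.mem_insert 0 _
  simp only [hmemA, hmemC, true_and, and_true]
  -- middle block
  rw [List.ofFn_eq_map, hg, List.forall₂_map_left_iff, List.forall₂_map_right_iff,
    List.forall₂_same]
  rw [Finset.sum_eq_zero_iff]
  constructor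
  · intro h j _
    have := h j (List.mem_finRange j)
    simp only [Set.mem_insert_iff, Set.mem_singleton_iff] at this
    generalize hx : v a j = x at this ⊢
    generalize hy : v b j = y at this ⊢
    fin_cases x <;> fin_cases y <;> revert this <;> decide
  · intro h j _
    have := h j (Finset.mem_univ j)
    simp only [Set.mem_insert_iff, Set.mem_singleton_iff]
    generalize hx : v a j = x at this ⊢
    generalize hy : v b j = y at this ⊢
    fin_cases x <;> fin_cases y <;> revert this <;> decide
end

section
/- Let D ≥ 1 and let s ∈ [1,D] divide D. Let A, B, C be D×D Boolean matrices with rows and columns indexed by [0,D). Over the alphabet consisting of distinct letters a, $, letters x̄ for each x ∈ [0,s), and letters v_i for each i ∈ [0,D), define the ED string T1 = X1 · X2 · X3 where: X1 contains the string v_i x̄ a^j whenever A[i, x·(D/s)+j] = 1; X2 contains the string a^{D/s−j} x̄ $ $ ȳ a^{D/s−k} whenever B[x·(D/s)+j, y·(D/s)+k] = 1; and X3 contains the string a^k ȳ v_i whenever C[y·(D/s)+k, i] = 1 (where i ranges over [0,D), j and k over [0,D/s), and x, y over [0,s)). Define the ED string T2 of length 1 whose single segment is { P(i,x,y) = v_i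 x̄ a^{D/s} x̄ $ $ ȳ a^{D/s} ȳ v_i : i ∈ [0,D), x, y ∈ [0,s) }. Then L(T1) ∩ L(T2) ≠ ∅ if and only if there exist indices i, j', k' ∈ [0,D) with A[i,j'] = B[j',k'] = C[k',i] = 1. -/
/-- The alphabet of the triangle-detection construction: a letter `a`, a letter `$`,
letters `x̄` (for `x ∈ [0,s)`) and letters `v_i` (for `i ∈ [0,D)`); all pairwise distinct. -/
inductive TDLetter : Type
  | a : TDLetter
  | dollar : TDLetter
  | xbar : ℕ → TDLetter
  | vlet : ℕ → TDLetter
  deriving DecidableEq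

/-- The string `P(i,x,y) = v_i x̄ a^{e} x̄ $ $ ȳ a^{e} ȳ v_i` (with `e = D/s`). -/
def Pstr (e i x y : ℕ) : List TDLetter :=
  [TDLetter.vlet i, TDLetter.xbar x] ++ List.replicate e TDLetter.a ++
    [TDLetter.xbar x, TDLetter.dollar, TDLetter.dollar, TDLetter.xbar y] ++
    List.replicate e TDLetter.a ++ [TDLetter.xbar y, TDLetter.vlet i]

lemma repl_eq {m n : ℕ} {b b' : TDLetter} {u u' : List TDLetter}
    (hb : b ≠ TDLetter.a) (hb' : b' ≠ TDLetter.a)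
    (h : List.replicate m TDLetter.a ++ b :: u = List.replicate n TDLetter.a ++ b' :: u') :
    m = n ∧ b = b' ∧ u = u' := by
  induction m generalizing n with
  | zero =>
    cases n with
    | zero => simpa using h
    | succ n =>
      rw [List.replicate_succ] at h
      simp at h
      exact absurd h.1 hb
  | succ m ih =>
    cases n with
    | zero =>
      rw [List.replicate_succ] at h
      simp at h
      exact absurd h.1.symm hb'
    | succ n =>
      rw [List.replicate_succ, List.replicate_succ] at h
      simp only [List.cons_append, List.cons.injEq, true_and] at h
      obtain ⟨hm, hb2, hu⟩ := ih h
      exact ⟨by omega, hb2, hu⟩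

/-- The triangle-detection reduction: with `T1 = X1 · X2 · X3` and `T2` (of length 1) as in
the construction, `L(T1) ∩ L(T2) ≠ ∅` iff the Boolean matrices `A, B, C` have a triangle. -/
theorem triangle_reduction (D s : ℕ) (hD : 1 ≤ D) (hs1 : 1 ≤ s) (hsD : s ≤ D) (hdvd : s ∣ D)
    (A B C : ℕ → ℕ → Bool) (X1 X2 X3 Y : Set (List TDLetter))
    (hX1 : X1 = { w | ∃ i x j : ℕ, i < D ∧ x < s ∧ j < D / s ∧
      A i (x * (D / s) + j) = true ∧
      w = [TDLetter.vlet i, TDLetter.xbar x] ++ List.replicate j TDLetter.a })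
    (hX2 : X2 = { w | ∃ x j y k : ℕ, x < s ∧ j < D / s ∧ y < s ∧ k < D / s ∧
      B (x * (D / s) + j) (y * (D / s) + k) = true ∧
      w = List.replicate (D / s - j) TDLetter.a ++
        [TDLetter.xbar x, TDLetter.dollar, TDLetter.dollar, TDLetter.xbar y] ++
        List.replicate (D / s - k) TDLetter.a })
    (hX3 : X3 = { w | ∃ y k i : ℕ, y < s ∧ k < D / s ∧ i < D ∧
      C (y * (D / s) + k) i = true ∧
      w = List.replicate k TDLetter.a ++ [TDLetter.xbar y, TDLetter.vlet i] })
    (hY : Y = { w | ∃ i x y : ℕ, i < D ∧ x < s ∧ y < s ∧ w = Pstr (D / s) i x y }) :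
    (EDLang [X1, X2, X3] ∩ EDLang [Y]).Nonempty ↔
      ∃ i j k : ℕ, i < D ∧ j < D ∧ k < D ∧
        A i j = true ∧ B j k = true ∧ C k i = true := by
  set e := D / s with he_def
  have hse : s * e = D := Nat.mul_div_cancel' hdvd
  have hes : e * s = D := by rw [Nat.mul_comm]; exact hse
  have he1 : 1 ≤ e := (Nat.one_le_div_iff (by omega)).mpr hsD
  constructor
  · rintro ⟨w, hw1, hw2⟩
    simp only [EDLang, Set.mem_setOf_eq, Set.mem_singleton_iff] at hw1 hw2
    obtain ⟨w1, hw1X, t, ⟨w2, hw2X, t2, ⟨w3, hw3X, t3, ht3, rfl⟩, rfl⟩, rfl⟩ := hw1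
    obtain ⟨p, hpY, tp, htp, hwp⟩ := hw2
    subst ht3 htp
    rw [hX1] at hw1X; rw [hX2] at hw2X; rw [hX3] at hw3X; rw [hY] at hpY
    obtain ⟨i1, x1, j1, hi1, hx1, hj1, hA, rfl⟩ := hw1X
    obtain ⟨x2, j2, y2, k2, hx2, hj2, hy2, hk2, hB, rfl⟩ := hw2X
    obtain ⟨y3, k3, i3, hy3, hk3, hi3, hC, rfl⟩ := hw3X
    obtain ⟨i, x, y, hi, hx, hy, rfl⟩ := hpY
    rw [List.append_nil] at hwp
    simp only [Pstr, List.append_assoc, List.cons_append, List.nil_append,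
      List.append_nil] at hwp
    rw [← List.append_assoc (List.replicate j1 TDLetter.a), ← List.replicate_add] at hwp
    injection hwp with h1 hwp
    injection hwp with h2 hwp
    injection h1 with h1; injection h2 with h2
    subst h1; subst h2
    obtain ⟨hm1, hbx, hq⟩ := repl_eq (by simp) (by simp) hwp
    clear hwp
    injection hbx with hbx; subst hbx
    injection hq with hd1 hq
    injection hq with hd2 hq
    injection hq with hby hq
    injection hby with hby; subst hby
    rw [← List.append_assoc (List.replicate (e - k2) TDLetter.a),
      ← List.replicate_add] at hq
    obtain ⟨hm2, hby3, hr⟩ := repl_eq (by simp) (by simp) hq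
    clear hq
    injection hby3 with hby3; subst hby3
    injection hr with h3 hr2
    injection h3 with h3; subst h3
    have hjj : j1 = j2 := by omega
    have hkk : k3 = k2 := by omega
    subst hjj; subst hkk
    refine ⟨i3, x2 * e + j1, y3 * e + k3, hi3, ?_, ?_, hA, hB, hC⟩
    · have h1 : x2 * e + e ≤ s * e := by
        have := Nat.mul_le_mul_right e (show x2 + 1 ≤ s by omega)
        simpa [Nat.add_mul] using this
      omega
    · have h1 : y3 * e + e ≤ s * e := by
        have := Nat.mul_le_mul_right e (show y3 + 1 ≤ s by omega)
        simpa [Nat.add_mul] using this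
      omega
  · rintro ⟨i, j', k', hi, hj', hk', hA, hB, hC⟩
    set x := j' / e with hx_def
    set j := j' % e with hj_def
    set y := k' / e with hy_def
    set k := k' % e with hk_def
    have hxj : x * e + j = j' := by
      rw [hx_def, hj_def, Nat.mul_comm]
      exact Nat.div_add_mod j' e
    have hyk : y * e + k = k' := by
      rw [hy_def, hk_def, Nat.mul_comm]
      exact Nat.div_add_mod k' e
    have hxs : x < s := by
      rw [hx_def]
      exact Nat.div_lt_of_lt_mul (by omega)
    have hys : y < s := by
      rw [hy_def]
      exact Nat.div_lt_of_lt_mul (by omega)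
    have hje : j < e := Nat.mod_lt _ (by omega)
    have hke : k < e := Nat.mod_lt _ (by omega)
    refine ⟨Pstr e i x y, ?_, ?_⟩
    · simp only [EDLang, Set.mem_setOf_eq, Set.mem_singleton_iff]
      refine ⟨[TDLetter.vlet i, TDLetter.xbar x] ++ List.replicate j TDLetter.a, ?_,
        _, ⟨List.replicate (e - j) TDLetter.a ++
          [TDLetter.xbar x, TDLetter.dollar, TDLetter.dollar, TDLetter.xbar y] ++
          List.replicate (e - k) TDLetter.a, ?_,
          _, ⟨List.replicate k TDLetter.a ++ [TDLetter.xbar y, TDLetter.vlet i], ?_,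
            [], rfl, rfl⟩, rfl⟩, ?_⟩
      · rw [hX1]
        exact ⟨i, x, j, hi, hxs, hje, by rwa [hxj], rfl⟩
      · rw [hX2]
        exact ⟨x, j, y, k, hxs, hje, hys, hke, by rwa [hxj, hyk], rfl⟩
      · rw [hX3]
        exact ⟨y, k, i, hys, hke, hi, by rwa [hyk], rfl⟩
      · rw [Pstr]
        nth_rewrite 1 [show List.replicate e TDLetter.a =
          List.replicate j TDLetter.a ++ List.replicate (e - j) TDLetter.a by
            rw [← List.replicate_add]; congr 1; omega]
        nth_rewrite 1 [show List.replicate e TDLetter.a =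
          List.replicate (e - k) TDLetter.a ++ List.replicate k TDLetter.a by
            rw [← List.replicate_add]; congr 1; omega]
        simp only [List.append_assoc, List.cons_append, List.nil_append, List.append_nil]
    · simp only [EDLang, Set.mem_setOf_eq, Set.mem_singleton_iff]
      exact ⟨Pstr e i x y, by rw [hY]; exact ⟨i, x, y, hi, hxs, hys, rfl⟩,
        [], rfl, by simp⟩
end

section
/- With D, s, A, B, C and the ED string T1 = X1·X2·X3 defined as in the triangle-detection construction (X1 contains v_i x̄ a^j whenever A[i, x·(D/s)+j] = 1; X2 contains a^{D/s−j} x̄ $ $ ȳ a^{D/s−k} whenever B[x·(D/s)+j, y·(D/s)+k] = 1; X3 contains a^k ȳ v_i whenever C[y·(D/s)+k, i] = 1), for every i ∈ [0,D) and x, y ∈ [0,s), the string P(i,x,y) = v_i x̄ a^{D/s} x̄ $ $ ȳ a^{D/s} ȳ v_i belongs to L(T1) if and only if there exist j, k ∈ [0, D/s) such that A[i, x·(D/s)+j] = B[x·(D/s)+j, y·(D/s)+k] = C[y·(D/s)+k, i] = 1. -/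
lemma rep_cons_eq : ∀ (m n : ℕ) (c c' : TDLetter) (u v : List TDLetter),
    c ≠ TDLetter.a → c' ≠ TDLetter.a →
    List.replicate m TDLetter.a ++ c :: u = List.replicate n TDLetter.a ++ c' :: v →
    m = n ∧ c = c' ∧ u = v := by
  intro m
  induction m with
  | zero =>
    intro n c c' u v hc hc' h
    cases n with
    | zero => simpa using h
    | succ n => simp [List.replicate_succ] at h; exact absurd h.1 hc
  | succ m ih =>
    intro n c c' u v hc hc' h
    cases n with
    | zero => simp [List.replicate_succ] at h; exact absurd h.1.symm hc'
    | succ n =>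
      simp only [List.replicate_succ, List.cons_append, List.cons.injEq] at h
      obtain ⟨m_eq, h2, h3⟩ := ih n c c' u v hc hc' h.2
      exact ⟨by omega, h2, h3⟩

/-- In the triangle-detection construction with `T1 = X1 · X2 · X3`, the string `P(i,x,y)`
belongs to `L(T1)` iff there are `j, k ∈ [0, D/s)` with
`A[i, x·(D/s)+j] = B[x·(D/s)+j, y·(D/s)+k] = C[y·(D/s)+k, i] = 1`. -/
theorem Pstr_mem_iff (D s : ℕ) (hD : 1 ≤ D) (hs1 : 1 ≤ s) (hsD : s ≤ D) (hdvd : s ∣ D)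
    (A B C : ℕ → ℕ → Bool) (X1 X2 X3 : Set (List TDLetter))
    (hX1 : X1 = { w | ∃ i x j : ℕ, i < D ∧ x < s ∧ j < D / s ∧
      A i (x * (D / s) + j) = true ∧
      w = [TDLetter.vlet i, TDLetter.xbar x] ++ List.replicate j TDLetter.a })
    (hX2 : X2 = { w | ∃ x j y k : ℕ, x < s ∧ j < D / s ∧ y < s ∧ k < D / s ∧
      B (x * (D / s) + j) (y * (D / s) + k) = true ∧
      w = List.replicate (D / s - j) TDLetter.a ++
        [TDLetter.xbar x, TDLetter.dollar, TDLetter.dollar, TDLetter.xbar y] ++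
        List.replicate (D / s - k) TDLetter.a })
    (hX3 : X3 = { w | ∃ y k i : ℕ, y < s ∧ k < D / s ∧ i < D ∧
      C (y * (D / s) + k) i = true ∧
      w = List.replicate k TDLetter.a ++ [TDLetter.xbar y, TDLetter.vlet i] })
    (i x y : ℕ) (hi : i < D) (hx : x < s) (hy : y < s) :
    Pstr (D / s) i x y ∈ EDLang [X1, X2, X3] ↔
      ∃ j k : ℕ, j < D / s ∧ k < D / s ∧
        A i (x * (D / s) + j) = true ∧
        B (x * (D / s) + j) (y * (D / s) + k) = true ∧
        C (y * (D / s) + k) i = true := by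
  set e := D / s with he
  have he1 : 1 ≤ e := Nat.one_le_div_iff hs1 |>.2 hsD
  constructor
  · rintro ⟨w1, hw1, w23, ⟨w2, hw2, w3, ⟨w3', hw3, wnil, hnil, hw3eq⟩, hw23⟩, heq⟩
    rw [hX1] at hw1; rw [hX2] at hw2; rw [hX3] at hw3
    obtain ⟨i1, x1, j, hi1, hx1, hj, hA, rfl⟩ := hw1
    obtain ⟨x2, j2, y2, k2, hx2, hj2, hy2, hk2, hB, rfl⟩ := hw2
    obtain ⟨y3, k3, i3, hy3, hk3, hi3, hC, rfl⟩ := hw3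
    have hnil' : wnil = [] := hnil
    subst hnil'; subst hw3eq; subst hw23
    simp only [Pstr, List.append_nil, List.append_assoc, List.cons_append,
      List.nil_append, List.cons.injEq] at heq
    obtain ⟨hvi, hxb, heq⟩ := heq
    injection hvi with hi1i; injection hxb with hx1x
    rw [← List.append_assoc, ← List.replicate_add] at heq
    obtain ⟨hlen1, hxb2, heq⟩ := rep_cons_eq _ _ _ _ _ _ (by simp) (by simp) heq
    injection hxb2 with hx2x
    simp only [List.cons.injEq] at heq
    obtain ⟨-, -, hyb2, heq⟩ := heq
    injection hyb2 with hy2y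
    rw [← List.append_assoc, ← List.replicate_add] at heq
    obtain ⟨hlen2, hyb3, heq⟩ := rep_cons_eq _ _ _ _ _ _ (by simp) (by simp) heq
    injection hyb3 with hy3y
    simp only [List.cons.injEq] at heq
    injection heq.1 with hi3i
    have hjj : j = j2 := by omega
    have hkk : k3 = k2 := by omega
    subst hi1i hx1x hx2x hy2y hy3y hi3i hjj hkk
    exact ⟨j, k3, hj2, hk2, hA, hB, hC⟩
  · rintro ⟨j, k, hj, hk, hA, hB, hC⟩
    refine ⟨[TDLetter.vlet i, TDLetter.xbar x] ++ List.replicate j TDLetter.a,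
      by rw [hX1]; exact ⟨i, x, j, hi, hx, hj, hA, rfl⟩,
      _, ⟨List.replicate (e - j) TDLetter.a ++
        [TDLetter.xbar x, TDLetter.dollar, TDLetter.dollar, TDLetter.xbar y] ++
        List.replicate (e - k) TDLetter.a,
        by rw [hX2]; exact ⟨x, j, y, k, hx, hj, hy, hk, hB, rfl⟩,
        _, ⟨List.replicate k TDLetter.a ++ [TDLetter.xbar y, TDLetter.vlet i],
          by rw [hX3]; exact ⟨y, k, i, hy, hk, hi, hC, rfl⟩, [], rfl, rfl⟩, rfl⟩, ?_⟩
    simp only [Pstr, List.append_nil, List.append_assoc, List.cons_append, List.nil_append]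
    rw [← List.append_assoc (List.replicate j TDLetter.a), ← List.replicate_add]
    have h1 : j + (e - j) = e := by omega
    rw [h1]
    rw [← List.append_assoc (List.replicate (e - k) TDLetter.a), ← List.replicate_add]
    have h2 : e - k + k = e := by omega
    rw [h2]
end

section
/- Let b₁, …, bₙ and c be non-negative integers and let a be a letter. Define the unary ED strings T1 with T1[i] = { a^{bᵢ}, ε } for all i ∈ [1,n], and T2 of length 1 with T2[1] = { a^c }. Then L(T1) ∩ L(T2) is nonempty if and only if there exist x₁, …, xₙ ∈ {0,1} such that Σ_{i=1}^{n} xᵢ·bᵢ = c. -/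
lemma mem_ed (n : ℕ) (b : Fin n → ℕ) (w : List Unit) :
    w ∈ EDLang ((List.finRange n).map fun i =>
        ({List.replicate (b i) (), ([] : List Unit)} : Set (List Unit))) ↔
      ∃ x : Fin n → Fin 2, w = List.replicate (∑ i : Fin n, (x i : ℕ) * b i) () := by
  induction n generalizing w with
  | zero =>
      simp [EDLang, List.finRange_zero]
  | succ n ih =>
      rw [List.finRange_succ, List.map_cons, List.map_map]
      simp only [Function.comp_def]
      constructor
      · rintro ⟨s, hs, t, ht, rfl⟩
        obtain ⟨x, rfl⟩ := (ih (fun i => b i.succ) t).1 ht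
        rcases hs with rfl | rfl
        · refine ⟨Fin.cons 1 x, ?_⟩
          rw [Fin.sum_univ_succ]
          simp only [Fin.cons_zero, Fin.cons_succ, Fin.val_one, one_mul, List.replicate_add]
        · refine ⟨Fin.cons 0 x, ?_⟩
          rw [Fin.sum_univ_succ]
          simp only [Fin.cons_zero, Fin.cons_succ, Fin.val_zero, zero_mul, zero_add,
            List.replicate_zero, List.nil_append]
      · rintro ⟨x, rfl⟩
        refine ⟨List.replicate ((x 0 : ℕ) * b 0) (), ?_,
          List.replicate (∑ i : Fin n, (x i.succ : ℕ) * b i.succ) (), ?_, ?_⟩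
        · have h : (x 0 : ℕ) = 0 ∨ (x 0 : ℕ) = 1 := by omega
          rcases h with h | h <;> simp [h]
        · exact (ih (fun i => b i.succ) _).2 ⟨fun i => x i.succ, rfl⟩
        · rw [Fin.sum_univ_succ, List.replicate_add]

/-- Subset-Sum reduction: for non-negative integers `b 0, …, b (n-1)` and `c`, the unary
ED strings `T1` with `T1[i] = {a^{b i}, ε}` and `T2 = ({a^c})` (over the one-letter
alphabet `Unit`) have intersecting languages iff some subset of the `b i` sums to `c`. -/
theorem subsetSum_reduction (n : ℕ) (b : Fin n → ℕ) (c : ℕ) :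
    (EDLang ((List.finRange n).map fun i =>
        ({List.replicate (b i) (), ([] : List Unit)} : Set (List Unit))) ∩
      EDLang [({List.replicate c ()} : Set (List Unit))]).Nonempty ↔
      ∃ x : Fin n → Fin 2, ∑ i : Fin n, (x i : ℕ) * b i = c := by
  constructor
  · rintro ⟨w, hw1, hw2⟩
    obtain ⟨x, rfl⟩ := (mem_ed n b w).1 hw1
    obtain ⟨s, rfl, t, ht, h⟩ := hw2
    simp only [EDLang, Set.mem_singleton_iff] at ht
    subst ht
    refine ⟨x, ?_⟩
    have := congrArg List.length h
    simpa using this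
  · rintro ⟨x, hx⟩
    refine ⟨List.replicate c (), (mem_ed n b _).2 ⟨x, by rw [hx]⟩, ?_⟩
    exact ⟨List.replicate c (), rfl, [], rfl, by simp⟩
end
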